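/- Let Σ' = Σ'_i × Σ'_{-i} ⊆ Σ with Σ'_{-i} nonempty and let σ ∈ Σ'_i. Then σ is not weakly dominated on Σ' (i.e., no mixed strategy of player i weakly dominates σ with respect to Σ'_{-i}) if and only if there exists an LPS μ⃗_σ = (μ_{σ,0}, …) on Σ'_{-i} whose first measure μ_{σ,0} has support all of Σ'_{-i}, such that for each information set I of player i, either Σ'_{σ,I,-i} = ∅ or σ is an almost-best response conditional on reaching I to μ⃗_σ | Σ'_{σ,I,-i}. -/

import Mathlib

open scoped BigOperators

noncomputable section

/-- A probability distribution on a finite type, represented as a weight function. -/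
def IsDist {α : Type*} [Fintype α] (p : α → ℝ) : Prop :=
  (∀ a, 0 ≤ p a) ∧ ∑ a, p a = 1

/-- The probability of a set under a weight function. -/
def probOf {α : Type*} [Fintype α] (p : α → ℝ) (E : Set α) : ℝ :=
  ∑ a, E.indicator p a

/-- A lexicographic probability sequence on a finite type. -/
structure LPS (Ω : Type*) [Fintype Ω] where
  m : ℕ
  μ : Fin (m + 1) → Ω → ℝ
  dist : ∀ ℓ, IsDist (μ ℓ)

namespace LPS

variable {Ω : Type*} [Fintype Ω]

open Classical in
/-- `(μ⃗(V | E))₀`: the conditional probability of `V` given `E` under the first measure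
of the LPS that gives `E` positive probability (0 if there is none). -/
def condFirst (L : LPS Ω) (V E : Set Ω) : ℝ :=
  if h : ∃ ℓ : ℕ, ∃ hℓ : ℓ < L.m + 1, 0 < probOf (L.μ ⟨ℓ, hℓ⟩) E then
    probOf (L.μ ⟨Nat.find h, (Nat.find_spec h).choose⟩) (V ∩ E) /
      probOf (L.μ ⟨Nat.find h, (Nat.find_spec h).choose⟩) E
  else 0

/-- Expectation of `f` under the first measure of `μ⃗|E`. -/
def condExp (L : LPS Ω) (E : Set Ω) (f : Ω → ℝ) : ℝ :=
  ∑ a, L.condFirst {a} E * f a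

end LPS

/-- The experience of player `i` along a history: the sequence of information-set labels of
`i` visited together with the actions `i` took there. `experGo owner label i pre rest`
processes the history `pre ++ rest`, where `pre` has already been traversed. -/
def experGo {Act Lab ι : Type*} [DecidableEq ι] (owner : List Act → ι)
    (label : List Act → Lab) (i : ι) : List Act → List Act → List (Lab × Act)
  | _, [] => []
  | pre, a :: rest =>
      (if owner pre = i then [(label pre, a)] else []) ++
        experGo owner label i (pre ++ [a]) rest

/-- A finite extensive-form game with perfect recall for `n` players and no chance moves,
presented via its set of histories (sequences of actions from the root). `owner h` is the
player who moves at a nonterminal history `h`, `label h` is the information set containing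
`h`, and `payoff i h` is `i`'s utility at a terminal history `h`. -/
structure ExtGame (n : ℕ) where
  Act : Type
  Lab : Type
  actFin : Fintype Act
  actDeq : DecidableEq Act
  actNe : Nonempty Act
  labFin : Fintype Lab
  labDeq : DecidableEq Lab
  maxLen : ℕ
  H : Set (List Act)
  root_mem : [] ∈ H
  prefix_closed : ∀ (h : List Act) (a : Act), h ++ [a] ∈ H → h ∈ H
  len_bound : ∀ h ∈ H, h.length ≤ maxLen
  owner : List Act → Fin n
  label : List Act → Lab
  payoff : Fin n → List Act → ℝ
  payoff_mem : ∀ (i : Fin n) (h : List Act), h ∈ H → (∀ a, h ++ [a] ∉ H) →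
    payoff i h ∈ Set.Icc (0 : ℝ) 1
  same_owner : ∀ h h', h ∈ H → h' ∈ H → (∃ a, h ++ [a] ∈ H) → (∃ a, h' ++ [a] ∈ H) →
    label h = label h' → owner h = owner h'
  same_actions : ∀ h h', h ∈ H → h' ∈ H → (∃ a, h ++ [a] ∈ H) → (∃ a, h' ++ [a] ∈ H) →
    label h = label h' → ∀ a, (h ++ [a] ∈ H ↔ h' ++ [a] ∈ H)
  no_two_on_path : ∀ h h', h ∈ H → h' ∈ H → (∃ a, h ++ [a] ∈ H) → (∃ a, h' ++ [a] ∈ H) →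
    label h = label h' → h <+: h' → h = h'
  perfect_recall : ∀ h h', h ∈ H → h' ∈ H → (∃ a, h ++ [a] ∈ H) → (∃ a, h' ++ [a] ∈ H) →
    label h = label h' →
    experGo owner label (owner h) [] h = experGo owner label (owner h) [] h'

attribute [instance] ExtGame.actFin ExtGame.actDeq ExtGame.actNe ExtGame.labFin
  ExtGame.labDeq

namespace ExtGame

variable {n : ℕ}

/-- `h` is a decision node. -/
def Dec (G : ExtGame n) (h : List G.Act) : Prop := h ∈ G.H ∧ ∃ a, h ++ [a] ∈ G.H

/-- `h` is a decision node of player `i`. -/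
def DecOf (G : ExtGame n) (i : Fin n) (h : List G.Act) : Prop := G.Dec h ∧ G.owner h = i

/-- `c` is (the label of) an information set of player `i`. -/
def IsInfo (G : ExtGame n) (i : Fin n) (c : G.Lab) : Prop :=
  ∃ h, G.DecOf i h ∧ G.label h = c

/-- A pure strategy of player `i`: an assignment of an available action to each
information set of `i`. -/
def PStrat (G : ExtGame n) (i : Fin n) : Type :=
  {s : G.Lab → G.Act // ∀ h, G.DecOf i h → h ++ [s (G.label h)] ∈ G.H}

instance (G : ExtGame n) (i : Fin n) : Finite (G.PStrat i) := Subtype.finite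

noncomputable instance (G : ExtGame n) (i : Fin n) : Fintype (G.PStrat i) :=
  Fintype.ofFinite _

noncomputable instance (G : ExtGame n) (i : Fin n) : DecidableEq (G.PStrat i) :=
  Classical.decEq _

/-- Opponents' pure-strategy profiles. -/
abbrev OppProf (G : ExtGame n) (i : Fin n) : Type :=
  (j : {j : Fin n // j ≠ i}) → G.PStrat j.val

/-- Combining a strategy for `i` with an opponents' profile. -/
def combine (G : ExtGame n) (i : Fin n) (s : G.PStrat i) (τ : G.OppProf i) :
    (j : Fin n) → G.PStrat j :=
  fun j => if h : j = i then cast (congrArg G.PStrat h.symm) s else τ ⟨j, h⟩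

open Classical in
/-- The play of the game from history `h` under profile `sp`, with fuel `f`. -/
def playFrom (G : ExtGame n) (sp : (j : Fin n) → G.PStrat j) :
    ℕ → List G.Act → List G.Act
  | 0, h => h
  | f + 1, h =>
      if G.Dec h then
        G.playFrom sp f (h ++ [(sp (G.owner h)).val (G.label h)])
      else h

/-- The terminal history reached by the profile `sp`. -/
def outcome (G : ExtGame n) (sp : (j : Fin n) → G.PStrat j) : List G.Act :=
  G.playFrom sp (G.maxLen + 1) []

/-- Player `i`'s utility under the profile `sp`. -/
def U (G : ExtGame n) (i : Fin n) (sp : (j : Fin n) → G.PStrat j) : ℝ :=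
  G.payoff i (G.outcome sp)

/-- The profile `sp` reaches the information set `c` of player `i`. -/
def Reaches (G : ExtGame n) (sp : (j : Fin n) → G.PStrat j) (i : Fin n) (c : G.Lab) :
    Prop :=
  ∃ p, p <+: G.outcome sp ∧ G.DecOf i p ∧ G.label p = c

/-- `Σ'_{σ,I,-i}`: the opponents' profiles in `T` for which `(σ, τ₋ᵢ)` reaches `c`. -/
def ReachSet (G : ExtGame n) (i : Fin n) (σ : G.PStrat i) (c : G.Lab)
    (T : Set (G.OppProf i)) : Set (G.OppProf i) :=
  {τ ∈ T | G.Reaches (G.combine i σ τ) i c}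

/-- `Σ'_{σ,σ',I,-i}` for a mixed strategy `m`. -/
def ReachSetMix (G : ExtGame n) (i : Fin n) (σ : G.PStrat i) (m : G.PStrat i → ℝ)
    (c : G.Lab) (T : Set (G.OppProf i)) : Set (G.OppProf i) :=
  {τ ∈ T | G.Reaches (G.combine i σ τ) i c ∧
    ∀ s, 0 < m s → G.Reaches (G.combine i s τ) i c}

/-- Utility of the mixed strategy `m` of player `i` against the opponents' profile `τ`. -/
def EUmixE (G : ExtGame n) (i : Fin n) (m : G.PStrat i → ℝ) (τ : G.OppProf i) : ℝ :=
  ∑ s : G.PStrat i, m s * G.U i (G.combine i s τ)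

/-- `σ` is conditionally dominated on `Σ'_i × T`. -/
def CondDom (G : ExtGame n) (i : Fin n) (σ : G.PStrat i) (T : Set (G.OppProf i)) :
    Prop :=
  ∃ c, G.IsInfo i c ∧ ∃ m : G.PStrat i → ℝ, IsDist m ∧
    (G.ReachSetMix i σ m c T).Nonempty ∧
    ∀ τ ∈ G.ReachSetMix i σ m c T, G.U i (G.combine i σ τ) < G.EUmixE i m τ

/-- The information set `c'` of player `i` is at or below `c`. -/
def AtOrBelow (G : ExtGame n) (i : Fin n) (c' c : G.Lab) : Prop :=
  ∃ h h', G.DecOf i h ∧ G.DecOf i h' ∧ G.label h' = c ∧ G.label h = c' ∧ h' <+: h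

/-- The information set `c'` of player `i` precedes `c`. -/
def Precedes (G : ExtGame n) (i : Fin n) (c' c : G.Lab) : Prop :=
  ∃ h h', G.DecOf i h ∧ G.DecOf i h' ∧ G.label h = c' ∧ G.label h' = c ∧
    h <+: h' ∧ h ≠ h'

/-- `σ` is conditionally dominated′ on `Σ'_i × T`. -/
def CondDom' (G : ExtGame n) (i : Fin n) (σ : G.PStrat i) (T : Set (G.OppProf i)) :
    Prop :=
  ∃ c, G.IsInfo i c ∧ (G.ReachSet i σ c T).Nonempty ∧
    ∃ m : G.PStrat i → ℝ, IsDist m ∧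
      (∀ s, 0 < m s → ∀ c', G.IsInfo i c' → ¬G.AtOrBelow i c' c →
        s.val c' = σ.val c') ∧
      ∀ τ ∈ G.ReachSet i σ c T, G.U i (G.combine i σ τ) < G.EUmixE i m τ

/-- `σ` is weakly dominated by the mixed strategy `m` with respect to `T`. -/
def WDomE (G : ExtGame n) (i : Fin n) (m : G.PStrat i → ℝ) (σ : G.PStrat i)
    (T : Set (G.OppProf i)) : Prop :=
  (∀ τ ∈ T, G.U i (G.combine i σ τ) ≤ G.EUmixE i m τ) ∧
    ∃ τ ∈ T, G.U i (G.combine i σ τ) < G.EUmixE i m τ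

/-- `σ` is an almost-best response conditional on reaching the information set `c` to the
first measure of `L | E`. -/
def AlmostBestAt (G : ExtGame n) (i : Fin n) (σ : G.PStrat i) (c : G.Lab)
    (L : LPS (G.OppProf i)) (E : Set (G.OppProf i)) : Prop :=
  ∀ σ' : G.PStrat i,
    (∀ c', G.IsInfo i c' → G.Precedes i c' c → σ'.val c' = σ.val c') →
    L.condExp E (fun τ => G.U i (G.combine i σ' τ)) ≤
      L.condExp E (fun τ => G.U i (G.combine i σ τ))

end ExtGame

end

-- ======================= Auxiliary material =======================

noncomputable section Aux

open Finset List


private lemma fmkey (N : ℕ) : ∀ (T : Type) (_ : Fintype T) (_ : DecidableEq T),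
    Fintype.card T ≤ N → ∀ (R : Type) (_ : Fintype R) (B : R → T → ℝ) (τ0 : T),
    (∃ m : R → ℝ, (∀ r, 0 ≤ m r) ∧ (∀ τ, 0 ≤ ∑ r, m r * B r τ) ∧ 0 < ∑ r, m r * B r τ0) ∨
    (∃ q : T → ℝ, (∀ r, ∑ τ, q τ * B r τ ≤ 0) ∧ 0 < q τ0) := by
  induction N with
  | zero =>
    intro T _ _ hT R _ B τ0
    have : 0 < Fintype.card T := Fintype.card_pos_iff.mpr ⟨τ0⟩
    omega
  | succ N ih =>
    intro T _ _ hT R _ B τ0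
    classical
    by_cases huniq : ∀ τ : T, τ = τ0
    · have huneq : (Finset.univ : Finset T) = {τ0} := by
        ext τ; simp [huniq τ]
      by_cases hpos : ∃ r, 0 < B r τ0
      · obtain ⟨r0, hr0⟩ := hpos
        refine Or.inl ⟨fun r => if r = r0 then 1 else 0, fun r => by positivity, ?_, ?_⟩
        · intro τ
          rw [huniq τ]
          simp only [ite_mul, one_mul, zero_mul, Finset.sum_ite_eq' Finset.univ r0,
            Finset.mem_univ, if_true]
          exact hr0.le
        · simp only [ite_mul, one_mul, zero_mul, Finset.sum_ite_eq' Finset.univ r0,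
            Finset.mem_univ, if_true]
          exact hr0
      · push_neg at hpos
        refine Or.inr ⟨fun _ => 1, fun r => ?_, one_pos⟩
        rw [huneq]
        simpa using hpos r
    · push_neg at huniq
      obtain ⟨τ1, hτ1⟩ := huniq
      -- set up the reduced type
      set T' := {τ : T // τ ≠ τ1} with hT'
      have hcard : Fintype.card T' ≤ N := by
        have h1 : Fintype.card T' = Fintype.card T - 1 := by
          have : Fintype.card {τ : T // ¬ τ = τ1} = Fintype.card T - 1 := by
            rw [Fintype.card_subtype_compl]; simp
          exact this
        have h2 : 0 < Fintype.card T := Fintype.card_pos_iff.mpr ⟨τ0⟩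
        omega
      set Brow : (R ⊕ R × R) → T → ℝ := fun r' τ =>
        match r' with
        | .inl r => if B r τ1 = 0 then B r τ else 0
        | .inr (a, b) => if 0 < B a τ1 ∧ B b τ1 < 0 then
            (-(B b τ1)) * B a τ + B a τ1 * B b τ else 0
        with hBrow
      have hBrowτ1 : ∀ r', Brow r' τ1 = 0 := by
        rintro (r | ⟨a, b⟩)
        · simp only [hBrow]
          split <;> simp_all
        · simp only [hBrow]
          split <;> ring_nf
      set B' : (R ⊕ R × R) → T' → ℝ := fun r' τ' => Brow r' τ'.val with hB'
      rcases ih T' inferInstance inferInstance hcard (R ⊕ R × R) inferInstance B' ⟨τ0, Ne.symm hτ1⟩ with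
        ⟨m', hm'0, hm'ge, hm'pos⟩ | ⟨q', hq'le, hq'pos⟩
      · -- reconstruct row certificate
        set m : R → ℝ := fun r =>
          (if B r τ1 = 0 then m' (.inl r) else 0) +
          ((∑ b, if 0 < B r τ1 ∧ B b τ1 < 0 then m' (.inr (r, b)) * (-(B b τ1)) else 0) +
           (∑ a, if 0 < B a τ1 ∧ B r τ1 < 0 then m' (.inr (a, r)) * (B a τ1) else 0)) with hm
        have hm0 : ∀ r, 0 ≤ m r := by
          intro r
          have h1 : (0:ℝ) ≤ if B r τ1 = 0 then m' (.inl r) else 0 := by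
            split
            · exact hm'0 _
            · exact le_refl 0
          have h2 : (0:ℝ) ≤ ∑ b, if 0 < B r τ1 ∧ B b τ1 < 0 then m' (.inr (r, b)) * (-(B b τ1)) else 0 := by
            apply Finset.sum_nonneg
            intro b _
            split
            · rename_i hc
              exact mul_nonneg (hm'0 _) (by linarith [hc.2])
            · exact le_refl 0
          have h3 : (0:ℝ) ≤ ∑ a, if 0 < B a τ1 ∧ B r τ1 < 0 then m' (.inr (a, r)) * (B a τ1) else 0 := by
            apply Finset.sum_nonneg
            intro a _
            split
            · rename_i hc
              exact mul_nonneg (hm'0 _) (le_of_lt hc.1)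
            · exact le_refl 0
          rw [hm]
          positivity
        have hsumid : ∀ τ, ∑ r, m r * B r τ = ∑ r', m' r' * Brow r' τ := by
          intro τ
          have lhs_split : ∑ r, m r * B r τ =
              (∑ r, (if B r τ1 = 0 then m' (.inl r) else 0) * B r τ) +
              ((∑ r, (∑ b, if 0 < B r τ1 ∧ B b τ1 < 0 then m' (.inr (r, b)) * (-(B b τ1)) else 0) * B r τ) +
               (∑ r, (∑ a, if 0 < B a τ1 ∧ B r τ1 < 0 then m' (.inr (a, r)) * (B a τ1) else 0) * B r τ)) := by
            rw [← Finset.sum_add_distrib, ← Finset.sum_add_distrib]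
            apply Finset.sum_congr rfl
            intro r _
            rw [hm]; ring
          have rhs_split : ∑ r', m' r' * Brow r' τ =
              (∑ r, m' (.inl r) * Brow (.inl r) τ) +
              (∑ p : R × R, m' (.inr p) * Brow (.inr p) τ) := by
            rw [Fintype.sum_sum_type]
          have e1 : ∑ r, (if B r τ1 = 0 then m' (.inl r) else 0) * B r τ =
              ∑ r, m' (.inl r) * Brow (.inl r) τ := by
            apply Finset.sum_congr rfl
            intro r _
            simp only [hBrow]
            split <;> ring
          have e2 : (∑ r, (∑ b, if 0 < B r τ1 ∧ B b τ1 < 0 then m' (.inr (r, b)) * (-(B b τ1)) else 0) * B r τ) +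
               (∑ r, (∑ a, if 0 < B a τ1 ∧ B r τ1 < 0 then m' (.inr (a, r)) * (B a τ1) else 0) * B r τ) =
              ∑ p : R × R, m' (.inr p) * Brow (.inr p) τ := by
            have e2a : ∑ r, (∑ b, if 0 < B r τ1 ∧ B b τ1 < 0 then m' (.inr (r, b)) * (-(B b τ1)) else 0) * B r τ
                = ∑ a, ∑ b, if 0 < B a τ1 ∧ B b τ1 < 0 then m' (.inr (a, b)) * ((-(B b τ1)) * B a τ) else 0 := by
              apply Finset.sum_congr rfl
              intro a _
              rw [Finset.sum_mul]
              apply Finset.sum_congr rfl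
              intro b _
              split <;> ring
            have e2b : ∑ r, (∑ a, if 0 < B a τ1 ∧ B r τ1 < 0 then m' (.inr (a, r)) * (B a τ1) else 0) * B r τ
                = ∑ a, ∑ b, if 0 < B a τ1 ∧ B b τ1 < 0 then m' (.inr (a, b)) * (B a τ1 * B b τ) else 0 := by
              have step1 : ∀ r : R, (∑ a, if 0 < B a τ1 ∧ B r τ1 < 0 then m' (.inr (a, r)) * (B a τ1) else 0) * B r τ
                  = ∑ a, (if 0 < B a τ1 ∧ B r τ1 < 0 then m' (.inr (a, r)) * (B a τ1) else 0) * B r τ :=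
                fun r => Finset.sum_mul _ _ _
              simp only [step1]
              rw [Finset.sum_comm]
              apply Finset.sum_congr rfl
              intro a _
              apply Finset.sum_congr rfl
              intro b _
              split <;> ring
            rw [e2a, e2b, ← Finset.sum_add_distrib]
            rw [Fintype.sum_prod_type]
            apply Finset.sum_congr rfl
            intro a _
            rw [← Finset.sum_add_distrib]
            apply Finset.sum_congr rfl
            intro b _
            simp only [hBrow]
            split
            · ring
            · ring_nf
          rw [lhs_split, rhs_split, e1, e2]
        refine Or.inl ⟨m, hm0, fun τ => ?_, ?_⟩
        · by_cases hτ : τ = τ1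
          · subst hτ
            rw [hsumid]
            apply Finset.sum_nonneg
            intro r' _
            rw [hBrowτ1 r']
            simp
          · rw [hsumid]
            exact hm'ge ⟨τ, hτ⟩
        · rw [hsumid]
          exact hm'pos
      · -- reconstruct column certificate
        set g : R → ℝ := fun r => ∑ τ' : T', q' τ' * B r τ'.val with hg
        have hz : ∀ r, B r τ1 = 0 → g r ≤ 0 := by
          intro r h
          have h2 : ∑ τ' : T', q' τ' * (if B r τ1 = 0 then B r τ'.val else 0) ≤ 0 :=
            hq'le (.inl r)
          simp only [if_pos h] at h2
          exact h2
        have hpair : ∀ a b, 0 < B a τ1 → B b τ1 < 0 →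
            (-(B b τ1)) * g a + B a τ1 * g b ≤ 0 := by
          intro a b ha hb
          have this : ∑ τ' : T', q' τ' *
              (if 0 < B a τ1 ∧ B b τ1 < 0 then (-(B b τ1)) * B a τ'.val + B a τ1 * B b τ'.val else 0) ≤ 0 :=
            hq'le (.inr (a, b))
          simp only [if_pos (And.intro ha hb)] at this
          calc (-(B b τ1)) * ∑ τ' : T', q' τ' * B a τ'.val +
                B a τ1 * ∑ τ' : T', q' τ' * B b τ'.val
              = ∑ τ' : T', q' τ' * ((-(B b τ1)) * B a τ'.val + B a τ1 * B b τ'.val) := by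
                rw [Finset.mul_sum, Finset.mul_sum, ← Finset.sum_add_distrib]
                congr 1; ext τ'; ring
            _ ≤ 0 := this
        -- choose the value at τ1
        set Pos : Finset R := Finset.univ.filter (fun r => 0 < B r τ1) with hPos
        set Neg : Finset R := Finset.univ.filter (fun r => B r τ1 < 0) with hNeg
        set V : ℝ :=
          if hP : Pos.Nonempty then Pos.inf' hP (fun r => -(g r) / B r τ1)
          else if hN : Neg.Nonempty then Neg.sup' hN (fun r => -(g r) / B r τ1)
          else 0 with hV
        have hdc : ∀ a b, 0 < B a τ1 → B b τ1 < 0 →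
            -(g b) / B b τ1 ≤ -(g a) / B a τ1 := by
          intro a b ha hb
          have h1 : -(g b) / B b τ1 = g b / (-(B b τ1)) := by
            rw [neg_div, ← div_neg]
          rw [h1, div_le_div_iff₀ (by linarith) ha]
          have := hpair a b ha hb
          nlinarith [hpair a b ha hb]
        have hVle : ∀ r, 0 < B r τ1 → V ≤ -(g r) / B r τ1 := by
          intro r hr
          have hP : Pos.Nonempty := ⟨r, by simp [hPos, hr]⟩
          rw [hV, dif_pos hP]
          exact Finset.inf'_le _ (by simp [hPos, hr])
        have hVge : ∀ r, B r τ1 < 0 → -(g r) / B r τ1 ≤ V := by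
          intro r hr
          by_cases hP : Pos.Nonempty
          · rw [hV, dif_pos hP]
            apply Finset.le_inf'
            intro a haP
            have ha : 0 < B a τ1 := by
              rw [hPos] at haP
              simpa using (Finset.mem_filter.mp haP).2
            exact hdc a r ha hr
          · have hmem : r ∈ Neg := by rw [hNeg]; simp [hr]
            have hN : Neg.Nonempty := ⟨r, hmem⟩
            rw [hV, dif_neg hP, dif_pos hN]
            exact Finset.le_sup' (fun r => -(g r) / B r τ1) hmem
        refine Or.inr ⟨fun τ => if h : τ = τ1 then V else q' ⟨τ, h⟩, ?_, ?_⟩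
        · intro r
          have hsplit : ∑ τ, (if h : τ = τ1 then V else q' ⟨τ, h⟩) * B r τ =
              V * B r τ1 + ∑ τ' : T', q' τ' * B r τ'.val := by
            rw [← Finset.add_sum_erase Finset.univ _ (Finset.mem_univ τ1)]
            congr 1
            · simp
            · rw [Finset.sum_subtype (p := fun τ => τ ≠ τ1) (Finset.univ.erase τ1)
                (fun x => by simp [Finset.mem_erase]) (fun τ => (if h : τ = τ1 then V else q' ⟨τ, h⟩) * B r τ)]
              apply Finset.sum_congr rfl
              intro τ' _
              rw [dif_neg τ'.prop]
          rw [hsplit]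
          rcases lt_trichotomy (B r τ1) 0 with hr | hr | hr
          · have h1 := hVge r hr
            have h2 : V * B r τ1 ≤ (-(g r) / B r τ1) * B r τ1 :=
              mul_le_mul_of_nonpos_right h1 (le_of_lt hr)
            rw [div_mul_cancel₀ _ (ne_of_lt hr)] at h2
            have : (g r : ℝ) = ∑ τ' : T', q' τ' * B r τ'.val := by rw [hg]
            linarith [h2]
          · rw [hr, mul_zero, zero_add]
            exact hz r hr
          · have h1 := hVle r hr
            have h2 : V * B r τ1 ≤ (-(g r) / B r τ1) * B r τ1 :=
              mul_le_mul_of_nonneg_right h1 (le_of_lt hr)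
            rw [div_mul_cancel₀ _ (ne_of_gt hr)] at h2
            have : (g r : ℝ) = ∑ τ' : T', q' τ' * B r τ'.val := by rw [hg]
            linarith [h2]
        · show 0 < if h : τ0 = τ1 then V else q' ⟨τ0, h⟩
          rw [dif_neg (Ne.symm hτ1)]
          exact hq'pos

private lemma key_alternative (S T : Type) [Fintype S] [Fintype T] [DecidableEq T]
    (A : S → T → ℝ) (τ0 : T) :
    (∃ m : S → ℝ, (∀ s, 0 ≤ m s) ∧ (∀ τ, 0 ≤ ∑ s, m s * A s τ) ∧ 0 < ∑ s, m s * A s τ0) ∨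
    (∃ q : T → ℝ, (∀ τ, 0 ≤ q τ) ∧ (∀ s, ∑ τ, q τ * A s τ ≤ 0) ∧ 0 < q τ0) := by
  classical
  set B : (S ⊕ T) → T → ℝ := fun r τ =>
    match r with
    | .inl s => A s τ
    | .inr τ' => if τ = τ' then (-1 : ℝ) else 0
    with hB
  rcases fmkey (Fintype.card T) T inferInstance inferInstance le_rfl (S ⊕ T)
      inferInstance B τ0 with ⟨m, hm0, hmge, hmpos⟩ | ⟨q, hqle, hqpos⟩
  · refine Or.inl ⟨fun s => m (.inl s), fun s => hm0 _, ?_, ?_⟩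
    · intro τ
      have h1 : ∑ r : S ⊕ T, m r * B r τ =
          (∑ s, m (.inl s) * A s τ) + (∑ τ', m (.inr τ') * (if τ = τ' then (-1:ℝ) else 0)) := by
        rw [Fintype.sum_sum_type]
      have h2 : ∑ τ', m (.inr τ') * (if τ = τ' then (-1:ℝ) else 0) = -(m (.inr τ)) := by
        rw [Finset.sum_eq_single τ]
        · simp
        · intro b _ hb; simp [Ne.symm hb]
        · intro h; exact absurd (Finset.mem_univ τ) h
      have := hmge τ
      rw [h1, h2] at this
      have h3 := hm0 (.inr τ)
      linarith
    · have h1 : ∑ r : S ⊕ T, m r * B r τ0 =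
          (∑ s, m (.inl s) * A s τ0) + (∑ τ', m (.inr τ') * (if τ0 = τ' then (-1:ℝ) else 0)) := by
        rw [Fintype.sum_sum_type]
      have h2 : ∑ τ', m (.inr τ') * (if τ0 = τ' then (-1:ℝ) else 0) = -(m (.inr τ0)) := by
        rw [Finset.sum_eq_single τ0]
        · simp
        · intro b _ hb; simp [Ne.symm hb]
        · intro h; exact absurd (Finset.mem_univ τ0) h
      have := hmpos
      rw [h1, h2] at this
      have h3 := hm0 (.inr τ0)
      linarith
  · refine Or.inr ⟨q, ?_, fun s => hqle (.inl s), hqpos⟩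
    intro τ
    have h1 : ∑ τ', q τ' * B (.inr τ) τ' = -(q τ) := by
      show ∑ τ', q τ' * (if τ' = τ then (-1:ℝ) else 0) = -(q τ)
      rw [Finset.sum_eq_single τ]
      · simp
      · intro b _ hb; simp [hb]
      · intro h; exact absurd (Finset.mem_univ τ) h
    have := hqle (.inr τ)
    rw [h1] at this
    linarith

private lemma full_support_best_response (S T : Type) [Fintype S] [Fintype T]
    [DecidableEq T] [Nonempty T] (A : S → T → ℝ)
    (h : ∀ m : S → ℝ, (∀ s, 0 ≤ m s) → (∀ τ, 0 ≤ ∑ s, m s * A s τ) →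
      ∀ τ0, ¬(0 < ∑ s, m s * A s τ0)) :
    ∃ q : T → ℝ, (∀ τ, 0 < q τ) ∧ (∑ τ, q τ = 1) ∧ ∀ s, ∑ τ, q τ * A s τ ≤ 0 := by
  classical
  have hq : ∀ τ0 : T, ∃ q : T → ℝ, (∀ τ, 0 ≤ q τ) ∧ (∀ s, ∑ τ, q τ * A s τ ≤ 0) ∧ 0 < q τ0 := by
    intro τ0
    rcases key_alternative S T A τ0 with ⟨m, hm0, hmge, hmpos⟩ | hgood
    · exact absurd hmpos (h m hm0 hmge τ0)
    · exact hgood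
  choose Q hQ0 hQle hQpos using hq
  set Qsum : T → ℝ := fun τ => ∑ τ0, Q τ0 τ with hQsum
  have hQsum0 : ∀ τ, 0 < Qsum τ := by
    intro τ
    apply Finset.sum_pos'
    · intro τ0 _; exact hQ0 τ0 τ
    · exact ⟨τ, Finset.mem_univ τ, hQpos τ⟩
  have hQsumle : ∀ s, ∑ τ, Qsum τ * A s τ ≤ 0 := by
    intro s
    have h1 : ∑ τ, Qsum τ * A s τ = ∑ τ0, ∑ τ, Q τ0 τ * A s τ := by
      rw [Finset.sum_comm]
      apply Finset.sum_congr rfl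
      intro τ _
      rw [hQsum]
      rw [Finset.sum_mul]
    rw [h1]
    exact Finset.sum_nonpos (fun τ0 _ => hQle τ0 s)
  set c : ℝ := ∑ τ, Qsum τ with hc
  have hcpos : 0 < c := Finset.sum_pos (fun τ _ => hQsum0 τ) Finset.univ_nonempty
  refine ⟨fun τ => Qsum τ / c, fun τ => div_pos (hQsum0 τ) hcpos, ?_, ?_⟩
  · rw [← Finset.sum_div]
    exact div_self (ne_of_gt hcpos)
  · intro s
    have h1 : ∑ τ, Qsum τ / c * A s τ = (∑ τ, Qsum τ * A s τ) / c := by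
      rw [Finset.sum_div]
      apply Finset.sum_congr rfl
      intro τ _; ring
    rw [h1]
    exact div_nonpos_of_nonpos_of_nonneg (hQsumle s) (le_of_lt hcpos)


-- ---------- experGo lemmas ----------

private lemma experGo_append {Act Lab ι : Type*} [DecidableEq ι] (owner : List Act → ι)
    (label : List Act → Lab) (i : ι) :
    ∀ (r1 r2 pre : List Act), experGo owner label i pre (r1 ++ r2) =
      experGo owner label i pre r1 ++ experGo owner label i (pre ++ r1) r2 := by
  intro r1
  induction r1 with
  | nil => intro r2 pre; simp [experGo]
  | cons a r1 ih =>
    intro r2 pre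
    show (if owner pre = i then [(label pre, a)] else []) ++
        experGo owner label i (pre ++ [a]) (r1 ++ r2) = _
    rw [ih r2 (pre ++ [a])]
    simp [experGo, List.append_assoc]

private lemma experGo_decomp {Act Lab ι : Type*} [DecidableEq ι] (owner : List Act → ι)
    (label : List Act → Lab) (i : ι) {h0 h : List Act} (hpre : h0 <+: h) (hne : h0 ≠ h)
    (how : owner h0 = i) :
    ∃ a t, h = h0 ++ a :: t ∧ experGo owner label i [] h =
      experGo owner label i [] h0 ++ [(label h0, a)] ++ experGo owner label i (h0 ++ [a]) t := by
  obtain ⟨t0, rfl⟩ := hpre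
  cases t0 with
  | nil => exact absurd (by simp) hne
  | cons a t =>
    refine ⟨a, t, rfl, ?_⟩
    have e1 := experGo_append owner label i h0 (a :: t) []
    simp only [List.nil_append] at e1
    rw [e1]
    show _ = experGo owner label i [] h0 ++ [(label h0, a)] ++ experGo owner label i (h0 ++ [a]) t
    have : experGo owner label i h0 (a :: t) =
        (if owner h0 = i then [(label h0, a)] else []) ++ experGo owner label i (h0 ++ [a]) t := rfl
    rw [this, how, if_pos rfl, List.append_assoc]

private lemma experGo_len_lt {Act Lab ι : Type*} [DecidableEq ι] (owner : List Act → ι)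
    (label : List Act → Lab) (i : ι) {h0 h : List Act} (hpre : h0 <+: h) (hne : h0 ≠ h)
    (how : owner h0 = i) :
    (experGo owner label i [] h0).length < (experGo owner label i [] h).length := by
  obtain ⟨a, t, rfl, he⟩ := experGo_decomp owner label i hpre hne how
  rw [he]
  simp

private lemma experGo_mem {Act Lab ι : Type*} [DecidableEq ι] (owner : List Act → ι)
    (label : List Act → Lab) (i : ι) {h0 h : List Act} (hpre : h0 <+: h) (hne : h0 ≠ h)
    (how : owner h0 = i) :
    ∃ a, (label h0, a) ∈ experGo owner label i [] h := by
  obtain ⟨a, t, rfl, he⟩ := experGo_decomp owner label i hpre hne how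
  rw [he]
  exact ⟨a, by simp⟩

private lemma experGo_mem_rev {Act Lab ι : Type*} [DecidableEq ι] (owner : List Act → ι)
    (label : List Act → Lab) (i : ι) :
    ∀ (rest pre : List Act) (c : Lab) (a : Act),
      (c, a) ∈ experGo owner label i pre rest →
      ∃ h0, pre <+: h0 ∧ h0 ++ [a] <+: pre ++ rest ∧ owner h0 = i ∧ label h0 = c := by
  intro rest
  induction rest with
  | nil => intro pre c a hmem; simp [experGo] at hmem
  | cons b rest ih =>
    intro pre c a hmem
    have hmem' : (c, a) ∈ (if owner pre = i then [(label pre, b)] else []) ++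
        experGo owner label i (pre ++ [b]) rest := hmem
    rw [List.mem_append] at hmem'
    rcases hmem' with hl | hr
    · by_cases how : owner pre = i
      · rw [if_pos how] at hl
        simp only [List.mem_singleton, Prod.mk.injEq] at hl
        refine ⟨pre, List.prefix_refl pre, ?_, how, hl.1.symm⟩
        rw [← hl.2]
        exact ⟨rest, by simp⟩
      · rw [if_neg how] at hl
        simp at hl
    · obtain ⟨h0, hp1, hp2, hp3, hp4⟩ := ih (pre ++ [b]) c a hr
      refine ⟨h0, ?_, ?_, hp3, hp4⟩
      · exact (List.prefix_append pre [b]).trans hp1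
      · rwa [List.append_assoc, List.singleton_append] at hp2

-- ---------- basic game-tree lemmas ----------

namespace ExtGame

variable {n : ℕ}

private lemma mem_of_prefix (G : ExtGame n) : ∀ {h h' : List G.Act},
    h' <+: h → h ∈ G.H → h' ∈ G.H := by
  intro h h' hpre hmem
  obtain ⟨t, rfl⟩ := hpre
  induction t using List.reverseRecOn with
  | nil => simpa using hmem
  | append_singleton t a ih =>
    apply ih
    apply G.prefix_closed (h' ++ t) a
    rw [List.append_assoc]
    exact hmem

open Classical in
/-- The rank of an information set of player `i`. -/
private noncomputable def rnk (G : ExtGame n) (i : Fin n) (c : G.Lab) : ℕ :=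
  if h : G.IsInfo i c then (experGo G.owner G.label i [] h.choose).length else 0

private lemma rnk_eq (G : ExtGame n) (i : Fin n) {c : G.Lab} (hinfo : G.IsInfo i c)
    {h : List G.Act} (hd : G.DecOf i h) (hl : G.label h = c) :
    (experGo G.owner G.label i [] h).length = G.rnk i c := by
  rw [rnk, dif_pos hinfo]
  obtain ⟨hd', hl'⟩ := hinfo.choose_spec
  have hpr := G.perfect_recall h hinfo.choose hd.1.1 hd'.1.1 hd.1.2 hd'.1.2
    (by rw [hl, hl'])
  rw [hd.2] at hpr
  rw [hpr]

private lemma precedes_rnk_lt (G : ExtGame n) (i : Fin n) {c' c : G.Lab}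
    (hpr : G.Precedes i c' c) : G.rnk i c' < G.rnk i c := by
  obtain ⟨h, h', hd, hd', hl, hl', hpre, hne⟩ := hpr
  rw [← rnk_eq G i ⟨h, hd, hl⟩ hd hl, ← rnk_eq G i ⟨h', hd', hl'⟩ hd' hl']
  exact experGo_len_lt G.owner G.label i hpre hne hd.2

private lemma atOrBelow_rnk_le (G : ExtGame n) (i : Fin n) {c'' c : G.Lab}
    (hab : G.AtOrBelow i c'' c) : G.rnk i c ≤ G.rnk i c'' := by
  obtain ⟨h, h', hd, hd', hl', hl, hpre⟩ := hab
  by_cases heq : h' = h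
  · subst heq; rw [hl] at hl'; rw [hl']
  · rw [← rnk_eq G i ⟨h', hd', hl'⟩ hd' hl', ← rnk_eq G i ⟨h, hd, hl⟩ hd hl]
    exact le_of_lt (experGo_len_lt G.owner G.label i hpre heq hd'.2)

private lemma not_precedes_of_atOrBelow (G : ExtGame n) (i : Fin n) {c'' c : G.Lab}
    (hab : G.AtOrBelow i c'' c) : ¬G.Precedes i c'' c := by
  intro hpr
  exact absurd (G.atOrBelow_rnk_le i hab) (not_le_of_gt (G.precedes_rnk_lt i hpr))

private lemma atOrBelow_refl (G : ExtGame n) (i : Fin n) {c : G.Lab}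
    (hinfo : G.IsInfo i c) : G.AtOrBelow i c c := by
  obtain ⟨h, hd, hl⟩ := hinfo
  exact ⟨h, h, hd, hd, hl, hl, List.prefix_refl h⟩

private lemma atOrBelow_of_node (G : ExtGame n) (i : Fin n) {c : G.Lab}
    {q h0 : List G.Act} (hdq : G.DecOf i q) (hd0 : G.DecOf i h0) (hl0 : G.label h0 = c)
    (hpre : h0 <+: q) : G.AtOrBelow i (G.label q) c :=
  ⟨q, h0, hdq, hd0, hl0, rfl, hpre⟩

private lemma exists_above_of_atOrBelow (G : ExtGame n) (i : Fin n) {c : G.Lab}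
    {q : List G.Act} (hdq : G.DecOf i q) (hab : G.AtOrBelow i (G.label q) c) :
    ∃ h0, h0 <+: q ∧ G.DecOf i h0 ∧ G.label h0 = c := by
  obtain ⟨h1, h1', hd1, hd1', hl1', hl1, hpre⟩ := hab
  by_cases heq : h1' = h1
  · subst heq
    rw [hl1] at hl1'
    exact ⟨q, List.prefix_refl q, hdq, hl1'⟩
  · obtain ⟨a, hmem⟩ := experGo_mem G.owner G.label i hpre heq hd1'.2
    have hpr := G.perfect_recall h1 q hd1.1.1 hdq.1.1 hd1.1.2 hdq.1.2 (by rw [hl1])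
    rw [hd1.2] at hpr
    rw [hpr] at hmem
    rw [hl1'] at hmem
    obtain ⟨h0, _, hp2, hp3, hp4⟩ := experGo_mem_rev G.owner G.label i q [] c a hmem
    rw [List.nil_append] at hp2
    have hp0 : h0 <+: q := (List.prefix_append h0 [a]).trans hp2
    have hmemH : h0 ∈ G.H := G.mem_of_prefix hp0 hdq.1.1
    have hsucc : h0 ++ [a] ∈ G.H := G.mem_of_prefix hp2 hdq.1.1
    exact ⟨h0, hp0, ⟨⟨hmemH, ⟨a, hsucc⟩⟩, hp3⟩, hp4⟩

-- ---------- play lemmas ----------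

private lemma playFrom_prefix (G : ExtGame n) (sp : (j : Fin n) → G.PStrat j) :
    ∀ (f : ℕ) (h : List G.Act), h <+: G.playFrom sp f h := by
  intro f
  induction f with
  | zero => intro h; exact List.prefix_refl h
  | succ f ih =>
    intro h
    rw [playFrom]
    by_cases hd : G.Dec h
    · rw [if_pos hd]
      exact (List.prefix_append h _).trans (ih _)
    · rw [if_neg hd]

private lemma playFrom_mem (G : ExtGame n) (sp : (j : Fin n) → G.PStrat j) :
    ∀ (f : ℕ) (h : List G.Act), h ∈ G.H → G.playFrom sp f h ∈ G.H := by
  intro f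
  induction f with
  | zero => intro h hm; exact hm
  | succ f ih =>
    intro h hm
    rw [playFrom]
    by_cases hd : G.Dec h
    · rw [if_pos hd]
      exact ih _ ((sp (G.owner h)).property h ⟨hd, rfl⟩)
    · rw [if_neg hd]; exact hm

private lemma playFrom_div (G : ExtGame n) (sp sp' : (j : Fin n) → G.PStrat j) :
    ∀ (f : ℕ) (h : List G.Act), h ∈ G.H →
      G.playFrom sp f h ≠ G.playFrom sp' f h →
      ∃ q, h <+: q ∧ G.Dec q ∧
        q ++ [(sp (G.owner q)).val (G.label q)] <+: G.playFrom sp f h ∧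
        q ++ [(sp' (G.owner q)).val (G.label q)] <+: G.playFrom sp' f h ∧
        (sp (G.owner q)).val (G.label q) ≠ (sp' (G.owner q)).val (G.label q) := by
  intro f
  induction f with
  | zero => intro h _ hne; exact absurd rfl hne
  | succ f ih =>
    intro h hm hne
    by_cases hd : G.Dec h
    · rw [playFrom, if_pos hd, playFrom, if_pos hd] at hne ⊢
      by_cases haa : (sp (G.owner h)).val (G.label h) = (sp' (G.owner h)).val (G.label h)
      · rw [haa] at hne
        have hm' : h ++ [(sp' (G.owner h)).val (G.label h)] ∈ G.H := by
          rw [← haa]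
          exact (sp (G.owner h)).property h ⟨hd, rfl⟩
        obtain ⟨q, hq1, hq2, hq3, hq4, hq5⟩ := ih _ hm' hne
        rw [haa]
        exact ⟨q, (List.prefix_append h _).trans hq1, hq2, hq3, hq4, hq5⟩
      · exact ⟨h, List.prefix_refl h, hd,
          (playFrom_prefix G sp f _),
          (playFrom_prefix G sp' f _), haa⟩
    · rw [playFrom, if_neg hd, playFrom, if_neg hd] at hne
      exact absurd rfl hne

private lemma combine_self (G : ExtGame n) (i : Fin n) (s : G.PStrat i)
    (τ : G.OppProf i) : G.combine i s τ i = s := by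
  rw [combine, dif_pos rfl]
  rfl

private lemma combine_other (G : ExtGame n) (i : Fin n) (s : G.PStrat i)
    (τ : G.OppProf i) (j : Fin n) (hj : j ≠ i) : G.combine i s τ j = τ ⟨j, hj⟩ := by
  rw [combine, dif_neg hj]

-- ---------- outcome lemmas ----------

private lemma outcome_div (G : ExtGame n) (i : Fin n) (s s' : G.PStrat i)
    (τ : G.OppProf i)
    (hne : G.outcome (G.combine i s τ) ≠ G.outcome (G.combine i s' τ)) :
    ∃ q, G.DecOf i q ∧
      q ++ [s.val (G.label q)] <+: G.outcome (G.combine i s τ) ∧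
      q ++ [s'.val (G.label q)] <+: G.outcome (G.combine i s' τ) ∧
      s.val (G.label q) ≠ s'.val (G.label q) := by
  obtain ⟨q, _, hq2, hq3, hq4, hq5⟩ :=
    playFrom_div G (G.combine i s τ) (G.combine i s' τ) (G.maxLen + 1) [] G.root_mem hne
  have howner : G.owner q = i := by
    by_contra how
    apply hq5
    rw [combine_other G i s τ _ how, combine_other G i s' τ _ how]
  rw [howner] at hq3 hq4 hq5
  rw [combine_self G i s τ] at hq3 hq5
  rw [combine_self G i s' τ] at hq4 hq5
  exact ⟨q, ⟨hq2, howner⟩, hq3, hq4, hq5⟩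

private lemma outcome_ext (G : ExtGame n) (i : Fin n) (s s' : G.PStrat i)
    (τ : G.OppProf i)
    (hcond : ∀ q, G.DecOf i q → q ++ [s.val (G.label q)] <+: G.outcome (G.combine i s τ) →
      s'.val (G.label q) = s.val (G.label q)) :
    G.outcome (G.combine i s' τ) = G.outcome (G.combine i s τ) := by
  by_contra hne
  obtain ⟨q, hq1, hq2, hq3, hq4⟩ := outcome_div G i s s' τ (Ne.symm hne)
  exact hq4 (hcond q hq1 hq2).symm

private lemma reach_node_unique (G : ExtGame n) (i : Fin n) {c : G.Lab}
    {o p p' : List G.Act} (hp : p <+: o) (hp' : p' <+: o) (hdp : G.DecOf i p)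
    (hdp' : G.DecOf i p') (hlp : G.label p = c) (hlp' : G.label p' = c) : p = p' := by
  rcases List.prefix_or_prefix_of_prefix hp hp' with h | h
  · exact G.no_two_on_path p p' hdp.1.1 hdp'.1.1 hdp.1.2 hdp'.1.2 (by rw [hlp, hlp']) h
  · exact (G.no_two_on_path p' p hdp'.1.1 hdp.1.1 hdp'.1.2 hdp.1.2
      (by rw [hlp, hlp']) h).symm

private lemma reach_agree (G : ExtGame n) (i : Fin n) (c : G.Lab) (s s' : G.PStrat i)
    (hagree : ∀ c', G.IsInfo i c' → G.Precedes i c' c → s'.val c' = s.val c')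
    (τ : G.OppProf i) {h0 : List G.Act} (hh0 : h0 <+: G.outcome (G.combine i s τ))
    (hd0 : G.DecOf i h0) (hl0 : G.label h0 = c) :
    h0 <+: G.outcome (G.combine i s' τ) := by
  by_cases heq : G.outcome (G.combine i s' τ) = G.outcome (G.combine i s τ)
  · rw [heq]; exact hh0
  obtain ⟨q, hdq, hq2, hq3, hq4⟩ := outcome_div G i s s' τ (Ne.symm heq)
  have hqpre : q <+: G.outcome (G.combine i s τ) :=
    (List.prefix_append q _).trans hq2
  rcases List.prefix_or_prefix_of_prefix hh0 hqpre with hcase | hcase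
  · exact hcase.trans ((List.prefix_append q _).trans hq3)
  · by_cases hqh0 : q = h0
    · rw [← hqh0]
      exact (List.prefix_append q _).trans hq3
    · exfalso
      apply hq4
      exact (hagree (G.label q) ⟨q, hdq, rfl⟩ ⟨q, h0, hdq, hd0, rfl, hl0, hcase, hqh0⟩).symm

private lemma no_reach_ext (G : ExtGame n) (i : Fin n) (c : G.Lab) (s s' : G.PStrat i)
    (hdiff : ∀ c'', G.IsInfo i c'' → ¬G.AtOrBelow i c'' c → s'.val c'' = s.val c'')
    (τ : G.OppProf i) (hnr : ¬G.Reaches (G.combine i s τ) i c) :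
    G.outcome (G.combine i s' τ) = G.outcome (G.combine i s τ) := by
  apply outcome_ext
  intro q hdq hqpre
  by_cases hab : G.AtOrBelow i (G.label q) c
  · exfalso
    obtain ⟨h0, hp0, hd0, hl0⟩ := G.exists_above_of_atOrBelow i hdq hab
    exact hnr ⟨h0, hp0.trans ((List.prefix_append q _).trans hqpre), hd0, hl0⟩
  · exact hdiff (G.label q) ⟨q, hdq, rfl⟩ hab

private lemma below_ext (G : ExtGame n) (i : Fin n) (s s' : G.PStrat i)
    (τ : G.OppProf i) {h0 : List G.Act}
    (hh0 : h0 <+: G.outcome (G.combine i s τ))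
    (hh0' : h0 <+: G.outcome (G.combine i s' τ))
    (hcond : ∀ q, G.DecOf i q → h0 <+: q →
      q ++ [s.val (G.label q)] <+: G.outcome (G.combine i s τ) →
      s'.val (G.label q) = s.val (G.label q)) :
    G.outcome (G.combine i s' τ) = G.outcome (G.combine i s τ) := by
  by_contra hne
  obtain ⟨q, hdq, hq2, hq3, hq4⟩ := outcome_div G i s s' τ (Ne.symm hne)
  have hqpre : q <+: G.outcome (G.combine i s τ) := (List.prefix_append q _).trans hq2
  rcases List.prefix_or_prefix_of_prefix hh0 hqpre with hcase | hcase
  · exact hq4 (hcond q hdq hcase hq2).symm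
  · by_cases hqh0 : q = h0
    · subst hqh0
      exact hq4 (hcond q hdq (List.prefix_refl q) hq2).symm
    · -- q is a proper prefix of h0
      have hlen : q.length < h0.length :=
        lt_of_le_of_ne hcase.length_le (fun h => hqh0 (hcase.eq_of_length h))
      have h1 : q ++ [s.val (G.label q)] <+: h0 := by
        apply List.prefix_of_prefix_length_le hq2 hh0
        rw [List.length_append, List.length_singleton]
        omega
      have h2 : q ++ [s.val (G.label q)] <+: G.outcome (G.combine i s' τ) :=
        h1.trans hh0'
      have h3 : q ++ [s.val (G.label q)] = q ++ [s'.val (G.label q)] := by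
        rcases List.prefix_or_prefix_of_prefix h2 hq3 with hc | hc
        · exact hc.eq_of_length (by simp)
        · exact (hc.eq_of_length (by simp)).symm
      apply hq4
      have := List.append_cancel_left h3
      simpa using this

-- ---------- strategy patching ----------

open Classical in
/-- Replace the behavior of `out` by that of `rep` at or below `c`. -/
private noncomputable def patch (G : ExtGame n) (i : Fin n) (c : G.Lab)
    (out rep : G.PStrat i) : G.PStrat i :=
  ⟨fun c'' => if G.AtOrBelow i c'' c then rep.val c'' else out.val c'', by
    intro h hd
    by_cases hab : G.AtOrBelow i (G.label h) c
    · simp only [if_pos hab]; exact rep.property h hd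
    · simp only [if_neg hab]; exact out.property h hd⟩

private lemma patch_at (G : ExtGame n) (i : Fin n) (c : G.Lab) (out rep : G.PStrat i)
    (c'' : G.Lab) (hab : G.AtOrBelow i c'' c) :
    (G.patch i c out rep).val c'' = rep.val c'' := by
  classical
  show (if G.AtOrBelow i c'' c then rep.val c'' else out.val c'') = rep.val c''
  rw [if_pos hab]

private lemma patch_off (G : ExtGame n) (i : Fin n) (c : G.Lab) (out rep : G.PStrat i)
    (c'' : G.Lab) (hab : ¬G.AtOrBelow i c'' c) :
    (G.patch i c out rep).val c'' = out.val c'' := by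
  classical
  show (if G.AtOrBelow i c'' c then rep.val c'' else out.val c'') = out.val c''
  rw [if_neg hab]

private lemma patch_pred (G : ExtGame n) (i : Fin n) {c c'' : G.Lab}
    (out rep : G.PStrat i) (hpr : G.Precedes i c'' c) :
    (G.patch i c out rep).val c'' = out.val c'' :=
  G.patch_off i c out rep c'' (fun hab => G.not_precedes_of_atOrBelow i hab hpr)

private lemma outF1 (G : ExtGame n) (i : Fin n) (c : G.Lab) (σ σ' : G.PStrat i)
    (τ : G.OppProf i) (hnr : ¬G.Reaches (G.combine i σ τ) i c) :
    G.outcome (G.combine i (G.patch i c σ σ') τ) = G.outcome (G.combine i σ τ) :=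
  no_reach_ext G i c σ (G.patch i c σ σ')
    (fun c'' _ hab => G.patch_off i c σ σ' c'' hab) τ hnr

private lemma outF2 (G : ExtGame n) (i : Fin n) (c : G.Lab) (σ σ' : G.PStrat i)
    (hagree : ∀ c', G.IsInfo i c' → G.Precedes i c' c → σ'.val c' = σ.val c')
    (τ : G.OppProf i) {h0 : List G.Act} (hh0 : h0 <+: G.outcome (G.combine i σ τ))
    (hd0 : G.DecOf i h0) (hl0 : G.label h0 = c) :
    G.outcome (G.combine i (G.patch i c σ σ') τ) = G.outcome (G.combine i σ' τ) := by
  have hh0' : h0 <+: G.outcome (G.combine i σ' τ) :=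
    reach_agree G i c σ σ' hagree τ hh0 hd0 hl0
  have hh02 : h0 <+: G.outcome (G.combine i (G.patch i c σ σ') τ) :=
    reach_agree G i c σ (G.patch i c σ σ')
      (fun c' _ hpr => G.patch_pred i σ σ' hpr) τ hh0 hd0 hl0
  exact below_ext G i σ' (G.patch i c σ σ') τ hh0' hh02
    (fun q hdq hq _ => G.patch_at i c σ σ' (G.label q)
      (G.atOrBelow_of_node i hdq hd0 hl0 hq))

private lemma outF3 (G : ExtGame n) (i : Fin n) (c : G.Lab) (σ σ' : G.PStrat i)
    (hagree : ∀ c', G.IsInfo i c' → G.Precedes i c' c → σ'.val c' = σ.val c')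
    (τ : G.OppProf i) {h0 : List G.Act} (hh0 : h0 <+: G.outcome (G.combine i σ τ))
    (hd0 : G.DecOf i h0) (hl0 : G.label h0 = c) :
    G.outcome (G.combine i (G.patch i c σ' σ) τ) = G.outcome (G.combine i σ τ) := by
  have hh04 : h0 <+: G.outcome (G.combine i (G.patch i c σ' σ) τ) := by
    apply reach_agree G i c σ (G.patch i c σ' σ) ?_ τ hh0 hd0 hl0
    intro c' hc' hpr
    rw [G.patch_pred i σ' σ hpr]
    exact hagree c' hc' hpr
  exact below_ext G i σ (G.patch i c σ' σ) τ hh0 hh04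
    (fun q hdq hq _ => G.patch_at i c σ' σ (G.label q)
      (G.atOrBelow_of_node i hdq hd0 hl0 hq))

private lemma outF4 (G : ExtGame n) (i : Fin n) (c : G.Lab) (σ σ' : G.PStrat i)
    (hagree : ∀ c', G.IsInfo i c' → G.Precedes i c' c → σ'.val c' = σ.val c')
    (τ : G.OppProf i) (hnr : ¬G.Reaches (G.combine i σ τ) i c) :
    G.outcome (G.combine i (G.patch i c σ' σ) τ) = G.outcome (G.combine i σ' τ) := by
  have hnr' : ¬G.Reaches (G.combine i σ' τ) i c := by
    rintro ⟨p0, hp0, hdp0, hlp0⟩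
    exact hnr ⟨p0, reach_agree G i c σ' σ
      (fun c' hc' hpr => (hagree c' hc' hpr).symm) τ hp0 hdp0 hlp0, hdp0, hlp0⟩
  exact no_reach_ext G i c σ' (G.patch i c σ' σ)
    (fun c'' _ hab => G.patch_off i c σ' σ c'' hab) τ hnr'

end ExtGame

-- ---------- conditional expectation lemmas ----------

private lemma probOf_pos {Ω : Type*} [Fintype Ω] (p : Ω → ℝ) (hp : ∀ a, 0 ≤ p a)
    {E : Set Ω} {a : Ω} (ha : a ∈ E) (hpa : 0 < p a) : 0 < probOf p E := by
  apply Finset.sum_pos'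
  · intro b _
    exact Set.indicator_nonneg (fun x _ => hp x) b
  · refine ⟨a, Finset.mem_univ a, ?_⟩
    rwa [Set.indicator_of_mem ha]

private lemma condExp_eq {Ω : Type*} [Fintype Ω] (L : LPS Ω) (E : Set Ω)
    (hpos : 0 < probOf (L.μ 0) E) (f : Ω → ℝ) :
    L.condExp E f = (∑ a, E.indicator (L.μ 0) a * f a) / probOf (L.μ 0) E := by
  classical
  have hex : ∃ ℓ : ℕ, ∃ hℓ : ℓ < L.m + 1, 0 < probOf (L.μ ⟨ℓ, hℓ⟩) E :=
    ⟨0, Nat.succ_pos L.m, hpos⟩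
  have hfind : Nat.find hex = 0 := by
    rw [Nat.find_eq_zero]
    exact ⟨Nat.succ_pos L.m, hpos⟩
  have hcf : ∀ V : Set Ω, L.condFirst V E =
      probOf (L.μ 0) (V ∩ E) / probOf (L.μ 0) E := by
    intro V
    rw [LPS.condFirst, dif_pos hex]
    have hFin : (⟨Nat.find hex, (Nat.find_spec hex).choose⟩ : Fin (L.m + 1)) = 0 := by
      apply Fin.ext
      simp [hfind, hpos]
    rw [hFin]
  have hsingle : ∀ a : Ω, probOf (L.μ 0) ({a} ∩ E) = E.indicator (L.μ 0) a := by
    intro a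
    rw [probOf, Finset.sum_eq_single a]
    · by_cases ha : a ∈ E
      · rw [Set.indicator_of_mem (by exact ⟨rfl, ha⟩), Set.indicator_of_mem ha]
      · rw [Set.indicator_of_notMem (by rintro ⟨_, h2⟩; exact ha h2),
          Set.indicator_of_notMem ha]
    · intro b _ hb
      apply Set.indicator_of_notMem
      rintro ⟨h1, _⟩
      exact hb h1
    · intro h; exact absurd (Finset.mem_univ a) h
  rw [LPS.condExp, Finset.sum_div]
  apply Finset.sum_congr rfl
  intro a _
  rw [hcf {a}, hsingle a]
  ring

-- ---------- global optimality from conditional optimality ----------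

namespace ExtGame

private lemma U_congr (G : ExtGame n) (i : Fin n) {sp sp' : (j : Fin n) → G.PStrat j}
    (h : G.outcome sp = G.outcome sp') : G.U i sp = G.U i sp' :=
  congrArg (G.payoff i) h

open Classical in
private lemma global_best (G : ExtGame n) (i : Fin n) (T : Set (G.OppProf i))
    (σ : G.PStrat i) (p : G.OppProf i → ℝ) (hp0 : ∀ τ, 0 ≤ p τ)
    (hsupp : ∀ τ, 0 < p τ ↔ τ ∈ T)
    (hcond : ∀ c, G.IsInfo i c → (G.ReachSet i σ c T).Nonempty →
      ∀ σ' : G.PStrat i,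
        (∀ c', G.IsInfo i c' → G.Precedes i c' c → σ'.val c' = σ.val c') →
        ∑ τ, (G.ReachSet i σ c T).indicator p τ * G.U i (G.combine i σ' τ) ≤
        ∑ τ, (G.ReachSet i σ c T).indicator p τ * G.U i (G.combine i σ τ)) :
    ∀ σ' : G.PStrat i,
      ∑ τ, p τ * G.U i (G.combine i σ' τ) ≤ ∑ τ, p τ * G.U i (G.combine i σ τ) := by
  classical
  set D : G.PStrat i → Finset G.Lab :=
    fun σ' => Finset.univ.filter (fun c => G.IsInfo i c ∧ σ'.val c ≠ σ.val c) with hD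
  have hzero : ∀ σ' : G.PStrat i, D σ' = ∅ →
      ∑ τ, p τ * G.U i (G.combine i σ' τ) = ∑ τ, p τ * G.U i (G.combine i σ τ) := by
    intro σ' hempty
    apply Finset.sum_congr rfl
    intro τ _
    congr 1
    apply U_congr
    apply outcome_ext G i σ σ' τ
    intro q hdq _
    by_contra hne
    have : G.label q ∈ D σ' := by
      rw [hD]
      exact Finset.mem_filter.mpr ⟨Finset.mem_univ _, ⟨q, hdq, rfl⟩, hne⟩
    rw [hempty] at this
    exact absurd this (Finset.notMem_empty _)
  suffices hmain : ∀ (k : ℕ) (σ' : G.PStrat i), (D σ').card ≤ k →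
      ∑ τ, p τ * G.U i (G.combine i σ' τ) ≤ ∑ τ, p τ * G.U i (G.combine i σ τ) by
    exact fun σ' => hmain (D σ').card σ' le_rfl
  intro k
  induction k with
  | zero =>
    intro σ' hcard
    exact le_of_eq (hzero σ' (Finset.card_eq_zero.mp (Nat.le_zero.mp hcard)))
  | succ k ih =>
    intro σ' hcard
    by_cases hDe : D σ' = ∅
    · exact le_of_eq (hzero σ' hDe)
    · have hne : (D σ').Nonempty := Finset.nonempty_of_ne_empty hDe
      obtain ⟨c, hcD, hcmin⟩ := Finset.exists_min_image (D σ') (G.rnk i) hne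
      have hinfoc : G.IsInfo i c := ((Finset.mem_filter.mp hcD).2).1
      have hagree : ∀ c', G.IsInfo i c' → G.Precedes i c' c → σ'.val c' = σ.val c' := by
        intro c' hc' hpr
        by_contra hne'
        have hmem : c' ∈ D σ' := Finset.mem_filter.mpr ⟨Finset.mem_univ _, hc', hne'⟩
        exact absurd (hcmin c' hmem) (not_le_of_gt (G.precedes_rnk_lt i hpr))
      set σ4 := G.patch i c σ' σ with hσ4
      have hDsub : D σ4 ⊆ (D σ').erase c := by
        intro x hx
        obtain ⟨-, hxinfo, hxne⟩ := Finset.mem_filter.mp hx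
        by_cases hab : G.AtOrBelow i x c
        · rw [hσ4] at hxne
          exact absurd (G.patch_at i c σ' σ x hab) hxne
        · rw [hσ4, G.patch_off i c σ' σ x hab] at hxne
          refine Finset.mem_erase.mpr ⟨?_, Finset.mem_filter.mpr
            ⟨Finset.mem_univ _, hxinfo, hxne⟩⟩
          intro hxc
          rw [hxc] at hab
          exact hab (G.atOrBelow_refl i hinfoc)
      have hcard4 : (D σ4).card ≤ k := by
        have h1 : (D σ4).card ≤ ((D σ').erase c).card := Finset.card_le_card hDsub
        have h2 : ((D σ').erase c).card = (D σ').card - 1 :=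
          Finset.card_erase_of_mem hcD
        have h3 : 1 ≤ (D σ').card := Finset.card_pos.mpr hne
        omega
      have h4 := ih σ4 hcard4
      set E := G.ReachSet i σ c T with hE
      have hET : ∀ τ, τ ∈ E → τ ∈ T ∧ G.Reaches (G.combine i σ τ) i c := fun τ h => h
      have hnotE : ∀ τ, 0 < p τ → τ ∉ E → ¬G.Reaches (G.combine i σ τ) i c := by
        intro τ hpτ hτE hreach
        exact hτE ⟨(hsupp τ).mp hpτ, hreach⟩
      have hptF4 : ∀ τ, (p τ - E.indicator p τ) * G.U i (G.combine i σ' τ) =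
          (p τ - E.indicator p τ) * G.U i (G.combine i σ4 τ) := by
        intro τ
        by_cases hτE : τ ∈ E
        · rw [Set.indicator_of_mem hτE]; ring
        · rw [Set.indicator_of_notMem hτE]
          rcases eq_or_lt_of_le (hp0 τ) with hpτ | hpτ
          · rw [← hpτ]; ring
          · rw [U_congr G i (outF4 G i c σ σ' hagree τ (hnotE τ hpτ hτE))]
      have hsplit : ∀ s : G.PStrat i, ∑ τ, p τ * G.U i (G.combine i s τ) =
          (∑ τ, E.indicator p τ * G.U i (G.combine i s τ)) +
          (∑ τ, (p τ - E.indicator p τ) * G.U i (G.combine i s τ)) := by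
        intro s
        rw [← Finset.sum_add_distrib]
        apply Finset.sum_congr rfl
        intro τ _
        ring
      by_cases hEne : E.Nonempty
      · have hsumE := hcond c hinfoc hEne (G.patch i c σ σ')
          (fun c' _ hpr => G.patch_pred i σ σ' hpr)
        have hpt2 : ∀ τ, E.indicator p τ * G.U i (G.combine i (G.patch i c σ σ') τ) =
            E.indicator p τ * G.U i (G.combine i σ' τ) := by
          intro τ
          by_cases hτE : τ ∈ E
          · obtain ⟨hτT, p0, hp0', hd0, hl0⟩ := hET τ hτE
            rw [U_congr G i (outF2 G i c σ σ' hagree τ hp0' hd0 hl0)]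
          · rw [Set.indicator_of_notMem hτE, zero_mul, zero_mul]
        have hpt3 : ∀ τ, E.indicator p τ * G.U i (G.combine i σ4 τ) =
            E.indicator p τ * G.U i (G.combine i σ τ) := by
          intro τ
          by_cases hτE : τ ∈ E
          · obtain ⟨hτT, p0, hp0', hd0, hl0⟩ := hET τ hτE
            rw [U_congr G i (outF3 G i c σ σ' hagree τ hp0' hd0 hl0)]
          · rw [Set.indicator_of_notMem hτE, zero_mul, zero_mul]
        calc ∑ τ, p τ * G.U i (G.combine i σ' τ)
            = (∑ τ, E.indicator p τ * G.U i (G.combine i σ' τ)) +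
              (∑ τ, (p τ - E.indicator p τ) * G.U i (G.combine i σ' τ)) := hsplit σ'
          _ = (∑ τ, E.indicator p τ * G.U i (G.combine i (G.patch i c σ σ') τ)) +
              (∑ τ, (p τ - E.indicator p τ) * G.U i (G.combine i σ4 τ)) := by
              congr 1
              · exact (Finset.sum_congr rfl (fun τ _ => (hpt2 τ).symm))
              · exact Finset.sum_congr rfl (fun τ _ => hptF4 τ)
          _ ≤ (∑ τ, E.indicator p τ * G.U i (G.combine i σ τ)) +
              (∑ τ, (p τ - E.indicator p τ) * G.U i (G.combine i σ4 τ)) := by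
              exact add_le_add_left hsumE _
          _ = (∑ τ, E.indicator p τ * G.U i (G.combine i σ4 τ)) +
              (∑ τ, (p τ - E.indicator p τ) * G.U i (G.combine i σ4 τ)) := by
              congr 1
              exact Finset.sum_congr rfl (fun τ _ => (hpt3 τ).symm)
          _ = ∑ τ, p τ * G.U i (G.combine i σ4 τ) := (hsplit σ4).symm
          _ ≤ ∑ τ, p τ * G.U i (G.combine i σ τ) := h4
      · have hEempty : E = ∅ := Set.not_nonempty_iff_eq_empty.mp hEne
        have heq : ∑ τ, p τ * G.U i (G.combine i σ' τ) =
            ∑ τ, p τ * G.U i (G.combine i σ4 τ) := by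
          apply Finset.sum_congr rfl
          intro τ _
          rcases eq_or_lt_of_le (hp0 τ) with hpτ | hpτ
          · rw [← hpτ, zero_mul, zero_mul]
          · have hτE : τ ∉ E := by rw [hEempty]; exact Set.notMem_empty τ
            rw [U_congr G i (outF4 G i c σ σ' hagree τ (hnotE τ hpτ hτE))]
        rw [heq]
        exact h4

end ExtGame



end Aux

/-- `σ` is not weakly dominated on `Σ'` iff there is an LPS on `Σ'_{-i}`
whose first measure has support all of `Σ'_{-i}` such that, conditional on reaching each
reachable information set `I` of `i`, `σ` is an almost-best response to the conditional
LPS. -/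
theorem not_weakly_dominated_iff_first_level_full_support_LPS {n : ℕ} (G : ExtGame n)
    (i : Fin n) (Ti : Set (G.PStrat i)) (T : Set (G.OppProf i)) (hT : T.Nonempty)
    (σ : G.PStrat i) (hσ : σ ∈ Ti) :
    (¬∃ m : G.PStrat i → ℝ, IsDist m ∧ G.WDomE i m σ T) ↔
      ∃ L : LPS (G.OppProf i),
        (∀ (ℓ : Fin (L.m + 1)) (τ : G.OppProf i), 0 < L.μ ℓ τ → τ ∈ T) ∧
        (∀ τ : G.OppProf i, 0 < L.μ 0 τ ↔ τ ∈ T) ∧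
        ∀ c, G.IsInfo i c →
          G.ReachSet i σ c T = ∅ ∨
          G.AlmostBestAt i σ c L (G.ReachSet i σ c T) := by
  classical
  constructor
  · -- not dominated ⇒ LPS exists
    intro hndom
    haveI : Fintype ↥T := Fintype.ofFinite _
    haveI : Nonempty ↥T := hT.to_subtype
    set A : G.PStrat i → ↥T → ℝ := fun s τc =>
      G.U i (G.combine i s τc.val) - G.U i (G.combine i σ τc.val) with hA
    have hnokey : ∀ m : G.PStrat i → ℝ, (∀ s, 0 ≤ m s) →
        (∀ τc, 0 ≤ ∑ s, m s * A s τc) → ∀ τ0, ¬(0 < ∑ s, m s * A s τ0) := by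
      intro m hm0 hmge τ0 hmpos
      apply hndom
      set sm := ∑ s, m s with hsm
      have hexp : ∀ τc : ↥T, ∑ s, m s * A s τc =
          (∑ s, m s * G.U i (G.combine i s τc.val)) -
            sm * G.U i (G.combine i σ τc.val) := by
        intro τc
        rw [hsm, Finset.sum_mul, ← Finset.sum_sub_distrib]
        apply Finset.sum_congr rfl
        intro s _
        rw [hA]
        ring
      have hsmnn : 0 ≤ sm := Finset.sum_nonneg (fun s _ => hm0 s)
      rcases eq_or_lt_of_le hsmnn with h0 | hsmpos
      · exfalso
        have hms : ∀ s ∈ Finset.univ, m s = 0 :=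
          (Finset.sum_eq_zero_iff_of_nonneg (fun s _ => hm0 s)).mp h0.symm
        have : ∑ s, m s * A s τ0 = 0 :=
          Finset.sum_eq_zero (fun s hs => by rw [hms s hs, zero_mul])
        rw [this] at hmpos
        exact lt_irrefl 0 hmpos
      refine ⟨fun s => m s / sm, ⟨fun s => div_nonneg (hm0 s) hsmnn, ?_⟩, ?_, ?_⟩
      · rw [← Finset.sum_div, ← hsm]
        exact div_self (ne_of_gt hsmpos)
      · intro τ hτ
        have h1 := hmge ⟨τ, hτ⟩
        rw [hexp ⟨τ, hτ⟩] at h1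
        have hEU : G.EUmixE i (fun s => m s / sm) τ =
            (∑ s, m s * G.U i (G.combine i s τ)) / sm := by
          rw [ExtGame.EUmixE, Finset.sum_div]
          apply Finset.sum_congr rfl
          intro s _
          ring
        rw [hEU, le_div_iff₀ hsmpos]
        simp only at h1
        linarith
      · refine ⟨τ0.val, τ0.prop, ?_⟩
        have h1 := hmpos
        rw [hexp τ0] at h1
        have hEU : G.EUmixE i (fun s => m s / sm) τ0.val =
            (∑ s, m s * G.U i (G.combine i s τ0.val)) / sm := by
          rw [ExtGame.EUmixE, Finset.sum_div]
          apply Finset.sum_congr rfl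
          intro s _
          ring
        rw [hEU, lt_div_iff₀ hsmpos]
        linarith
    obtain ⟨p', hp'pos, hp'sum, hp'le⟩ :=
      full_support_best_response (G.PStrat i) ↥T A hnokey
    set p : G.OppProf i → ℝ := fun τ => if h : τ ∈ T then p' ⟨τ, h⟩ else 0 with hp
    have hSTL : ∀ f : G.OppProf i → ℝ,
        ∑ τ, p τ * f τ = ∑ τc : ↥T, p' τc * f τc.val := by
      intro f
      rw [← Finset.sum_filter_add_sum_filter_not Finset.univ (fun τ => τ ∈ T)
        (fun τ => p τ * f τ)]
      have hz : ∑ τ ∈ Finset.univ.filter (fun τ => ¬τ ∈ T), p τ * f τ = 0 := by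
        apply Finset.sum_eq_zero
        intro τ hτ
        have hτ' : ¬τ ∈ T := (Finset.mem_filter.mp hτ).2
        rw [hp]
        simp only [dif_neg hτ', zero_mul]
      rw [hz, add_zero]
      rw [Finset.sum_subtype (p := fun τ => τ ∈ T) _ (fun x => by simp)
        (fun τ => p τ * f τ)]
      apply Finset.sum_congr rfl
      intro τc _
      rw [hp]
      simp only [dif_pos τc.prop]
    have hp0 : ∀ τ, 0 ≤ p τ := by
      intro τ
      rw [hp]
      by_cases hτ : τ ∈ T
      · simp only [dif_pos hτ]
        exact le_of_lt (hp'pos _)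
      · simp only [dif_neg hτ]
        exact le_refl 0
    have hpsupp : ∀ τ, 0 < p τ ↔ τ ∈ T := by
      intro τ
      constructor
      · intro hpos
        by_contra hτ
        rw [hp] at hpos
        simp only [dif_neg hτ] at hpos
        exact lt_irrefl 0 hpos
      · intro hτ
        rw [hp]
        simp only [dif_pos hτ]
        exact hp'pos _
    have hpdist : IsDist p := by
      refine ⟨hp0, ?_⟩
      have h1 := hSTL (fun _ => 1)
      simp only [mul_one] at h1
      rw [h1, hp'sum]
    have hglobal : ∀ s : G.PStrat i, ∑ τ, p τ * G.U i (G.combine i s τ) ≤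
        ∑ τ, p τ * G.U i (G.combine i σ τ) := by
      intro s
      have h1 := hp'le s
      have h2 : ∑ τc : ↥T, p' τc * A s τc =
          (∑ τ, p τ * G.U i (G.combine i s τ)) -
            (∑ τ, p τ * G.U i (G.combine i σ τ)) := by
        rw [hSTL (fun τ => G.U i (G.combine i s τ)),
          hSTL (fun τ => G.U i (G.combine i σ τ)), ← Finset.sum_sub_distrib]
        apply Finset.sum_congr rfl
        intro τc _
        rw [hA]
        ring
      rw [h2] at h1
      linarith
    refine ⟨⟨0, fun _ => p, fun _ => hpdist⟩, fun ℓ τ hpos => (hpsupp τ).mp hpos,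
      hpsupp, ?_⟩
    intro c hinfo
    by_cases hE : G.ReachSet i σ c T = ∅
    · exact Or.inl hE
    refine Or.inr ?_
    intro σ' hagree'
    have hEne : (G.ReachSet i σ c T).Nonempty := Set.nonempty_iff_ne_empty.mpr hE
    obtain ⟨τw, hτw⟩ := hEne
    have hprob : 0 < probOf p (G.ReachSet i σ c T) :=
      probOf_pos p hp0 hτw ((hpsupp τw).mpr hτw.1)
    rw [condExp_eq _ _ hprob, condExp_eq _ _ hprob]
    rw [div_le_div_iff_of_pos_right hprob]
    -- now the sum inequality
    set E := G.ReachSet i σ c T with hEdef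
    set σ2 := G.patch i c σ σ' with hσ2
    have hg := hglobal σ2
    have hpt2 : ∀ τ, E.indicator p τ * G.U i (G.combine i σ2 τ) =
        E.indicator p τ * G.U i (G.combine i σ' τ) := by
      intro τ
      by_cases hτE : τ ∈ E
      · obtain ⟨hτT, p0, hp0', hd0, hl0⟩ := hτE
        rw [hσ2, ExtGame.U_congr G i (ExtGame.outF2 G i c σ σ' hagree' τ hp0' hd0 hl0)]
      · rw [Set.indicator_of_notMem hτE, zero_mul, zero_mul]
    have hpt1 : ∀ τ, (p τ - E.indicator p τ) * G.U i (G.combine i σ2 τ) =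
        (p τ - E.indicator p τ) * G.U i (G.combine i σ τ) := by
      intro τ
      by_cases hτE : τ ∈ E
      · rw [Set.indicator_of_mem hτE]
        ring
      · rw [Set.indicator_of_notMem hτE]
        rcases eq_or_lt_of_le (hp0 τ) with hpτ | hpτ
        · rw [← hpτ]
          ring
        · have hnr : ¬G.Reaches (G.combine i σ τ) i c := by
            intro hreach
            exact hτE ⟨(hpsupp τ).mp hpτ, hreach⟩
          rw [hσ2, ExtGame.U_congr G i (ExtGame.outF1 G i c σ σ' τ hnr)]
    have hsplit : ∀ s : G.PStrat i, ∑ τ, p τ * G.U i (G.combine i s τ) =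
        (∑ τ, E.indicator p τ * G.U i (G.combine i s τ)) +
        (∑ τ, (p τ - E.indicator p τ) * G.U i (G.combine i s τ)) := by
      intro s
      rw [← Finset.sum_add_distrib]
      apply Finset.sum_congr rfl
      intro τ _
      ring
    have e1 : ∑ τ, E.indicator p τ * G.U i (G.combine i σ2 τ) =
        ∑ τ, E.indicator p τ * G.U i (G.combine i σ' τ) :=
      Finset.sum_congr rfl (fun τ _ => hpt2 τ)
    have e2 : ∑ τ, (p τ - E.indicator p τ) * G.U i (G.combine i σ2 τ) =
        ∑ τ, (p τ - E.indicator p τ) * G.U i (G.combine i σ τ) :=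
      Finset.sum_congr rfl (fun τ _ => hpt1 τ)
    have h5 := hsplit σ2
    have h6 := hsplit σ
    rw [h5, h6, e1, e2] at hg
    linarith
  · -- LPS exists ⇒ not dominated
    rintro ⟨L, hLsub, hLsupp, hLcond⟩ ⟨m, hmdist, hwk, τs, hτsT, hτsst⟩
    set p : G.OppProf i → ℝ := L.μ 0 with hpdef
    have hp0 : ∀ τ, 0 ≤ p τ := (L.dist 0).1
    have hcond : ∀ c, G.IsInfo i c → (G.ReachSet i σ c T).Nonempty →
        ∀ σ' : G.PStrat i,
          (∀ c', G.IsInfo i c' → G.Precedes i c' c → σ'.val c' = σ.val c') →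
          ∑ τ, (G.ReachSet i σ c T).indicator p τ * G.U i (G.combine i σ' τ) ≤
          ∑ τ, (G.ReachSet i σ c T).indicator p τ * G.U i (G.combine i σ τ) := by
      intro c hinfo hEne σ' hagr
      rcases hLcond c hinfo with hemp | habs
      · exfalso
        rw [hemp] at hEne
        exact Set.not_nonempty_empty hEne
      · obtain ⟨τw, hτw⟩ := hEne
        have hprob : 0 < probOf p (G.ReachSet i σ c T) :=
          probOf_pos p hp0 hτw ((hLsupp τw).mpr hτw.1)
        have h2 := habs σ' hagr
        rw [condExp_eq _ _ hprob, condExp_eq _ _ hprob] at h2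
        exact (div_le_div_iff_of_pos_right hprob).mp h2
    have hglobal := ExtGame.global_best G i T σ p hp0 hLsupp hcond
    have hlt : ∑ τ, p τ * G.U i (G.combine i σ τ) < ∑ τ, p τ * G.EUmixE i m τ := by
      apply Finset.sum_lt_sum
      · intro τ _
        rcases eq_or_lt_of_le (hp0 τ) with h0 | hpos
        · rw [← h0, zero_mul, zero_mul]
        · exact mul_le_mul_of_nonneg_left (hwk τ ((hLsupp τ).mp hpos)) (le_of_lt hpos)
      · exact ⟨τs, Finset.mem_univ _,
          mul_lt_mul_of_pos_left hτsst ((hLsupp τs).mpr hτsT)⟩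
    have hge : ∑ τ, p τ * G.EUmixE i m τ ≤ ∑ τ, p τ * G.U i (G.combine i σ τ) := by
      have h1 : ∑ τ, p τ * G.EUmixE i m τ =
          ∑ s, m s * ∑ τ, p τ * G.U i (G.combine i s τ) := by
        have ha : ∀ τ : G.OppProf i, p τ * G.EUmixE i m τ =
            ∑ s, m s * (p τ * G.U i (G.combine i s τ)) := by
          intro τ
          rw [ExtGame.EUmixE, Finset.mul_sum]
          apply Finset.sum_congr rfl
          intro s _
          ring
        rw [Finset.sum_congr rfl (fun τ _ => ha τ), Finset.sum_comm]
        apply Finset.sum_congr rfl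
        intro s _
        rw [Finset.mul_sum]
      rw [h1]
      calc ∑ s, m s * ∑ τ, p τ * G.U i (G.combine i s τ)
          ≤ ∑ s, m s * ∑ τ, p τ * G.U i (G.combine i σ τ) := by
            apply Finset.sum_le_sum
            intro s _
            exact mul_le_mul_of_nonneg_left (hglobal s) (hmdist.1 s)
        _ = (∑ s : G.PStrat i, m s) * ∑ τ, p τ * G.U i (G.combine i σ τ) := by
            rw [Finset.sum_mul]
        _ = ∑ τ, p τ * G.U i (G.combine i σ τ) := by
            rw [hmdist.2, one_mul]
    linarith
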